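/- Discounted GPI for entropic utility: if |𝒥̃^{π_i}_β(s,a,z) − 𝒥^{π_i}_β(s,a,z)| ≤ εz for all s, a, z ∈ [0,1], i, and π(s,z) ∈ argmax_a max_i 𝒥̃^{π_i}_β(s,a,z), then 𝒥^π_β(s,a,z) ≥ max_i 𝒥^{π_i}_β(s,a,z) − 2εz/(1−γ). -/

import Mathlib

open Finset

/-- The entropic utility of `f(s')` where `s' ∼ p`, for a finite distribution `p`. -/
noncomputable def Ubel {S : Type*} [Fintype S] (β : ℝ) (p : S → ℝ) (f : S → ℝ) : ℝ :=
  (1 / β) * Real.log (∑ s', p s' * Real.exp (β * f s'))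

lemma Ubel_sum_pos {S : Type*} [Fintype S] (β : ℝ) (p : S → ℝ) (f : S → ℝ)
    (hp0 : ∀ s, 0 ≤ p s) (hp1 : ∑ s, p s = 1) :
    0 < ∑ s', p s' * Real.exp (β * f s') := by
  have hex : ∃ s, 0 < p s := by
    by_contra h
    push_neg at h
    have hz : ∀ s, p s = 0 := fun s => le_antisymm (h s) (hp0 s)
    simp [hz] at hp1
  obtain ⟨s0, hs0⟩ := hex
  refine Finset.sum_pos' (fun i _ => mul_nonneg (hp0 i) (Real.exp_pos _).le) ?_
  exact ⟨s0, Finset.mem_univ _, mul_pos hs0 (Real.exp_pos _)⟩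

lemma Ubel_mono {S : Type*} [Fintype S] {β : ℝ} (hβ : β ≠ 0) {p : S → ℝ}
    (hp0 : ∀ s, 0 ≤ p s) (hp1 : ∑ s, p s = 1) {f g : S → ℝ} (hfg : ∀ s, f s ≤ g s) :
    Ubel β p f ≤ Ubel β p g := by
  have hf := Ubel_sum_pos β p f hp0 hp1
  have hg := Ubel_sum_pos β p g hp0 hp1
  unfold Ubel
  rcases lt_or_gt_of_ne hβ with hneg | hpos
  · have hsum : ∑ s', p s' * Real.exp (β * g s') ≤ ∑ s', p s' * Real.exp (β * f s') :=
      Finset.sum_le_sum fun s _ => mul_le_mul_of_nonneg_left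
        (Real.exp_le_exp.2 (mul_le_mul_of_nonpos_left (hfg s) hneg.le)) (hp0 s)
    have hlog := Real.log_le_log hg hsum
    have h1β : (1 / β) < 0 := div_neg_of_pos_of_neg one_pos hneg
    nlinarith [hlog]
  · have hsum : ∑ s', p s' * Real.exp (β * f s') ≤ ∑ s', p s' * Real.exp (β * g s') :=
      Finset.sum_le_sum fun s _ => mul_le_mul_of_nonneg_left
        (Real.exp_le_exp.2 (mul_le_mul_of_nonneg_left (hfg s) hpos.le)) (hp0 s)
    have hlog := Real.log_le_log hf hsum
    have h1β : 0 ≤ (1 / β) := by positivity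
    nlinarith [hlog]

lemma Ubel_add_const {S : Type*} [Fintype S] {β : ℝ} (hβ : β ≠ 0) {p : S → ℝ}
    (hp0 : ∀ s, 0 ≤ p s) (hp1 : ∑ s, p s = 1) (f : S → ℝ) (c : ℝ) :
    Ubel β p (fun s => f s + c) = Ubel β p f + c := by
  have hf := Ubel_sum_pos β p f hp0 hp1
  unfold Ubel
  have hrw : ∀ s, p s * Real.exp (β * (f s + c))
      = Real.exp (β * c) * (p s * Real.exp (β * f s)) := by
    intro s; rw [mul_add, Real.exp_add]; ring
  rw [Finset.sum_congr rfl fun s _ => hrw s, ← Finset.mul_sum,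
    Real.log_mul (Real.exp_ne_zero _) (ne_of_gt hf), Real.log_exp]
  field_simp
  ring

/-- **Discounted GPI for the entropic utility.**  On the augmented discounted MDP (where
`z ∈ [0,1]` tracks accumulated discounting and transitions send `z ↦ γ z`), let
`J i` be the entropic utility functions of stationary policies `π i` (the unique
fixed points of the entropic Bellman operator, hence bounded by a multiple of `z`).
If `|J̃ i s a z - J i s a z| ≤ ε z` and `πg` is the GPI policy, choosing at `(s,z)`
an action maximizing `max_i J̃ i s · z`, then the utility `Jπ` of `πg` satisfies
`Jπ s a z ≥ max_i J i s a z - 2 ε z / (1 - γ)`. -/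
theorem entropic_GPI_discounted {S A : Type*} [Fintype S] [Fintype A] (n : ℕ)
    (β : ℝ) (hβ : β ≠ 0) (γ : ℝ) (hγ : γ ∈ Set.Ioo (0 : ℝ) 1)
    (P : S → A → S → ℝ) (hP0 : ∀ s a s', 0 ≤ P s a s') (hP1 : ∀ s a, ∑ s', P s a s' = 1)
    (r : S → A → S → ℝ)
    (π : Fin n → S → ℝ → A)
    (J : Fin n → S → A → ℝ → ℝ)
    (hJ : ∀ i s a z, z ∈ Set.Icc (0 : ℝ) 1 →
      J i s a z = Ubel β (P s a)
        (fun s' => z * r s a s' + J i s' (π i s' (γ * z)) (γ * z)))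
    (C : ℝ) (hJb : ∀ i s a z, z ∈ Set.Icc (0 : ℝ) 1 → |J i s a z| ≤ C * z)
    (Jt : Fin n → S → A → ℝ → ℝ) (ε : ℝ)
    (hApprox : ∀ i s a z, z ∈ Set.Icc (0 : ℝ) 1 → |Jt i s a z - J i s a z| ≤ ε * z)
    (πg : S → ℝ → A)
    (hGPI : ∀ s z a i, z ∈ Set.Icc (0 : ℝ) 1 → ∃ j, Jt i s a z ≤ Jt j s (πg s z) z)
    (Jπ : S → A → ℝ → ℝ)
    (hJπ : ∀ s a z, z ∈ Set.Icc (0 : ℝ) 1 →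
      Jπ s a z = Ubel β (P s a)
        (fun s' => z * r s a s' + Jπ s' (πg s' (γ * z)) (γ * z)))
    (hJπb : ∀ s a z, z ∈ Set.Icc (0 : ℝ) 1 → |Jπ s a z| ≤ C * z) :
    ∀ s a z, z ∈ Set.Icc (0 : ℝ) 1 → ∀ i,
      Jπ s a z ≥ J i s a z - 2 * ε * z / (1 - γ) := by
  obtain ⟨hγ0, hγ1⟩ := hγ
  have h1γ : 0 < 1 - γ := by linarith
  set L : ℝ := 2 * ε * γ / (1 - γ) with hL
  set K : ℕ → ℝ := fun m => γ ^ m * (2 * C - L) + L with hK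
  have hK0 : K 0 = 2 * C := by simp [hK]
  have hKrec : ∀ m, K (m + 1) = γ * (K m + 2 * ε) := by
    intro m
    simp only [hK, pow_succ]
    field_simp [hL]
    have hL1 : L * (1 - γ) = 2 * ε * γ := by rw [hL, div_mul_cancel₀ _ h1γ.ne']
    linear_combination hL1
  have hzmem : ∀ z : ℝ, z ∈ Set.Icc (0 : ℝ) 1 → γ * z ∈ Set.Icc (0 : ℝ) 1 := by
    intro z hz
    exact ⟨mul_nonneg hγ0.le hz.1, by nlinarith [hz.1, hz.2]⟩
  have key : ∀ m : ℕ, ∀ s a z, z ∈ Set.Icc (0 : ℝ) 1 → ∀ i,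
      J i s a z - Jπ s a z ≤ K m * z := by
    intro m
    induction m with
    | zero =>
      intro s a z hz i
      have ha := abs_le.1 (hJb i s a z hz)
      have hb := abs_le.1 (hJπb s a z hz)
      rw [hK0]
      linarith [ha.1, ha.2, hb.1, hb.2]
    | succ m ih =>
      intro s a z hz i
      have hz' := hzmem z hz
      have hpt : ∀ s', z * r s a s' + J i s' (π i s' (γ * z)) (γ * z)
          ≤ (z * r s a s' + Jπ s' (πg s' (γ * z)) (γ * z)) + (K m + 2 * ε) * (γ * z) := by
        intro s'
        obtain ⟨j, hj⟩ := hGPI s' (γ * z) (π i s' (γ * z)) i hz'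
        have h1 := abs_le.1 (hApprox i s' (π i s' (γ * z)) (γ * z) hz')
        have h2 := abs_le.1 (hApprox j s' (πg s' (γ * z)) (γ * z) hz')
        have h3 := ih s' (πg s' (γ * z)) (γ * z) hz' j
        linarith [h1.1, h1.2, h2.1, h2.2]
      have hmono := Ubel_mono hβ (hP0 s a) (hP1 s a) hpt
      have hcash := Ubel_add_const hβ (hP0 s a) (hP1 s a)
        (fun s' => z * r s a s' + Jπ s' (πg s' (γ * z)) (γ * z)) ((K m + 2 * ε) * (γ * z))
      have hmain : J i s a z ≤ Jπ s a z + K (m + 1) * z := by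
        rw [hJ i s a z hz, hJπ s a z hz, hKrec m]
        calc Ubel β (P s a) (fun s' => z * r s a s' + J i s' (π i s' (γ * z)) (γ * z))
            ≤ Ubel β (P s a) (fun s' =>
                (z * r s a s' + Jπ s' (πg s' (γ * z)) (γ * z)) + (K m + 2 * ε) * (γ * z)) :=
              hmono
          _ = Ubel β (P s a) (fun s' => z * r s a s' + Jπ s' (πg s' (γ * z)) (γ * z))
              + (K m + 2 * ε) * (γ * z) := hcash
          _ = Ubel β (P s a) (fun s' => z * r s a s' + Jπ s' (πg s' (γ * z)) (γ * z))
              + γ * (K m + 2 * ε) * z := by ring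
      linarith
  intro s a z hz i
  have hε : 0 ≤ ε := by
    have := hApprox i s a 1 (by norm_num)
    have h0 := abs_nonneg (Jt i s a 1 - J i s a 1)
    linarith [this]
  -- take the limit m → ∞ in `key`
  have htend : Filter.Tendsto (fun m => K m * z) Filter.atTop (nhds (L * z)) := by
    have h1 : Filter.Tendsto (fun m : ℕ => γ ^ m) Filter.atTop (nhds 0) :=
      tendsto_pow_atTop_nhds_zero_of_lt_one hγ0.le hγ1
    have h2 : Filter.Tendsto (fun m : ℕ => (γ ^ m * (2 * C - L) + L) * z)
        Filter.atTop (nhds ((0 * (2 * C - L) + L) * z)) :=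
      (((h1.mul_const (2 * C - L)).add_const L).mul_const z)
    simpa [hK] using h2
  have hlim : J i s a z - Jπ s a z ≤ L * z :=
    ge_of_tendsto' htend fun m => key m s a z hz i
  have hLz : L * z ≤ 2 * ε * z / (1 - γ) := by
    rw [hL, div_mul_eq_mul_div, div_le_div_iff₀ h1γ h1γ]
    nlinarith [mul_nonneg (mul_nonneg hε hz.1) (mul_pos h1γ h1γ).le]
  linarith
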